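/- Assume Assumptions A hold with q ∈ (0, 1/2) and set q₁ = q/(1−q). If u ∈ B(y, R) and u⁺ = u − [F'(u)]^{−1}(F(u) − f) is one step of the Newton iteration, then ‖u⁺ − y‖ ≤ q₁·‖u − y‖. -/

import Mathlib

open Metric Set Filter

theorem stmt_12
    {H : Type*} [NormedAddCommGroup H] [InnerProductSpace ℝ H] [CompleteSpace H]
    (F : H → H) (F' : H → H →L[ℝ] H) (y f : H) (R m q : ℝ)
    (hf : F y = f) (hR : 0 < R)
    (hdiff : ∀ u ∈ closedBall y R, HasFDerivAt F (F' u) u)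
    (Q : H →L[ℝ] H)
    (hQl : Q.comp (F' y) = ContinuousLinearMap.id ℝ H)
    (hQr : (F' y).comp Q = ContinuousLinearMap.id ℝ H)
    (hm : 0 < m) (hQm : ‖Q‖ ≤ m)
    (ω : ℝ → ℝ)
    (hωcont : ContinuousOn ω (Icc 0 (2 * R)))
    (hωmono : StrictMonoOn ω (Icc 0 (2 * R)))
    (hω0 : ω 0 = 0)
    (hωF : ∀ u ∈ closedBall y R, ∀ v ∈ closedBall y R, ‖F' u - F' v‖ ≤ ω ‖u - v‖)
    (hq : m * ω R = q) (hq0 : 0 < q) (hq1 : q < 1)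
    (hqhalf : q < 1/2) (q₁ : ℝ) (hq₁ : q₁ = q / (1 - q))
    (u : H) (hu : u ∈ closedBall y R) (S : H →L[ℝ] H)
    (hSl : S.comp (F' u) = ContinuousLinearMap.id ℝ H)
    (hSr : (F' u).comp S = ContinuousLinearMap.id ℝ H)
    (uplus : H) (huplus : uplus = u - S (F u - f)) :
    ‖uplus - y‖ ≤ q₁ * ‖u - y‖ := by
  have hy : y ∈ closedBall y R := mem_closedBall_self hR.le
  have huy : ‖u - y‖ ≤ R := by
    simpa [dist_eq_norm] using hu
  have hq1' : 0 < 1 - q := by linarith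
  have hωR0 : 0 < ω R := by
    by_contra h
    push_neg at h
    nlinarith
  have hmono := hωmono.monotoneOn
  have hRIcc : R ∈ Icc 0 (2 * R) := ⟨hR.le, by linarith⟩
  -- pointwise inverses
  have hSl' : ∀ v, S (F' u v) = v := by
    intro v
    have := congrArg (fun T : H →L[ℝ] H => T v) hSl
    simpa using this
  have hQr' : ∀ v, F' y (Q v) = v := by
    intro v
    have := congrArg (fun T : H →L[ℝ] H => T v) hQr
    simpa using this
  -- bound on ‖F' y - F' u‖
  have hFyu : ‖F' y - F' u‖ ≤ ω R := by
    have h1 := hωF y hy u hu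
    have h2 : ω ‖y - u‖ ≤ ω R :=
      hmono ⟨norm_nonneg _, by rw [norm_sub_rev]; linarith⟩ hRIcc
        (by rw [norm_sub_rev]; exact huy)
    linarith
  -- bound on ‖S‖
  have hSkey : ∀ x, S x = Q x + S ((F' y - F' u) (Q x)) := by
    intro x
    have h1 : S x = S (F' y (Q x)) := by rw [hQr' x]
    rw [h1]
    have h2 : F' y (Q x) = (F' y - F' u) (Q x) + F' u (Q x) := by
      simp [ContinuousLinearMap.sub_apply]
    rw [h2, map_add, hSl']
    abel
  have hSbound : ‖S‖ ≤ m + q * ‖S‖ := by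
    apply ContinuousLinearMap.opNorm_le_bound
    · have := norm_nonneg S
      nlinarith
    · intro x
      have hQx : ‖Q x‖ ≤ m * ‖x‖ :=
        le_trans (Q.le_opNorm x) (mul_le_mul_of_nonneg_right hQm (norm_nonneg x))
      have h2 : ‖S ((F' y - F' u) (Q x))‖ ≤ ‖S‖ * (ω R * (m * ‖x‖)) := by
        calc ‖S ((F' y - F' u) (Q x))‖
            ≤ ‖S‖ * ‖(F' y - F' u) (Q x)‖ := S.le_opNorm _
          _ ≤ ‖S‖ * (‖F' y - F' u‖ * ‖Q x‖) :=
              mul_le_mul_of_nonneg_left ((F' y - F' u).le_opNorm _) (norm_nonneg S)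
          _ ≤ ‖S‖ * (ω R * (m * ‖x‖)) := by
              apply mul_le_mul_of_nonneg_left _ (norm_nonneg S)
              exact mul_le_mul hFyu hQx (norm_nonneg _) hωR0.le
      rw [hSkey x]
      calc ‖Q x + S ((F' y - F' u) (Q x))‖
          ≤ ‖Q x‖ + ‖S ((F' y - F' u) (Q x))‖ := norm_add_le _ _
        _ ≤ m * ‖x‖ + ‖S‖ * (ω R * (m * ‖x‖)) := add_le_add hQx h2
        _ = (m + q * ‖S‖) * ‖x‖ := by rw [← hq]; ring
  have hSnorm : ‖S‖ ≤ m / (1 - q) := by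
    rw [le_div_iff₀ hq1']
    nlinarith [norm_nonneg S]
  -- mean value estimate on the segment
  have hseg : segment ℝ y u ⊆ closedBall y R :=
    (convex_closedBall y R).segment_subset hy hu
  have hmvt : ‖(F y - F' u y) - (F u - F' u u)‖ ≤ ω R * ‖y - u‖ := by
    apply Convex.norm_image_sub_le_of_norm_hasFDerivWithin_le
      (f := fun x => F x - F' u x) (f' := fun x => F' x - F' u)
      (fun x hx => ((hdiff x (hseg hx)).sub ((F' u).hasFDerivAt)).hasFDerivWithinAt)
      (fun x hx => ?_) (convex_segment y u) (right_mem_segment ℝ y u)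
      (left_mem_segment ℝ y u)
    -- bound on the segment
    have hxu : ‖x - u‖ ≤ R := by
      have hx' : x ∈ closedBall u (dist y u) :=
        (convex_closedBall u (dist y u)).segment_subset
          (mem_closedBall.mpr le_rfl) (mem_closedBall_self dist_nonneg) hx
      have hd : dist x u ≤ dist y u := by simpa using hx'
      rw [dist_eq_norm, dist_eq_norm, norm_sub_rev y u] at hd
      linarith
    calc ‖F' x - F' u‖ ≤ ω ‖x - u‖ := hωF x (hseg hx) u hu
      _ ≤ ω R := hmono ⟨norm_nonneg _, by linarith⟩ hRIcc hxu
  -- identify uplus - y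
  have hid : uplus - y = S (F' u (u - y) - (F u - F y)) := by
    rw [huplus, ← hf]
    simp only [map_sub, hSl']
    abel
  have hnormin : ‖F' u (u - y) - (F u - F y)‖ ≤ ω R * ‖u - y‖ := by
    have heq : F' u (u - y) - (F u - F y) = (F y - F' u y) - (F u - F' u u) := by
      rw [map_sub]; abel
    rw [heq]
    calc ‖(F y - F' u y) - (F u - F' u u)‖ ≤ ω R * ‖y - u‖ := hmvt
      _ = ω R * ‖u - y‖ := by rw [norm_sub_rev]
  calc ‖uplus - y‖ = ‖S (F' u (u - y) - (F u - F y))‖ := by rw [hid]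
    _ ≤ ‖S‖ * ‖F' u (u - y) - (F u - F y)‖ := S.le_opNorm _
    _ ≤ (m / (1 - q)) * (ω R * ‖u - y‖) :=
        mul_le_mul hSnorm hnormin (norm_nonneg _) (by positivity)
    _ = q₁ * ‖u - y‖ := by
        rw [hq₁, ← hq]; field_simp
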